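/- Let x₁,…,xₙ ∈ ℝ^d and suppose index sets G_k, G_l ⊂ [n] satisfy: every xⱼxⱼᵀ with j ∈ G_l can be written as Σ_{i∈G_k} αᵢ xᵢxᵢᵀ with αᵢ ≥ 0 and Σ_{i∈G_k} αᵢ < 1. If w ∈ ℝⁿ₊ with M(w) ≻ 0 satisfies xⱼᵀ M(w)⁻¹ xⱼ = c for some j ∈ G_l and xᵢᵀ M(w)⁻¹ xᵢ ≤ c for all i ∈ G_k (for some c > 0), then a contradiction arises; i.e., no such j exists and hence w_{G_l} = 0 at any such stationary point. -/
import Mathlib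


open Matrix

lemma quad_eq_trace {d : ℕ} (A : Matrix (Fin d) (Fin d) ℝ) (x : Fin d → ℝ) :
    x ⬝ᵥ A *ᵥ x = (A * vecMulVec x x).trace := by
  simp only [trace, diag_apply, Matrix.mul_apply, vecMulVec_apply, dotProduct, mulVec,
    Finset.mul_sum]
  refine Finset.sum_congr rfl fun i _ => Finset.sum_congr rfl fun k _ => by ring

theorem free_riding_by_diversity {n d : ℕ}
    (x : Fin n → Fin d → ℝ) (Gk Gl : Finset (Fin n))
    (hcover : ∀ j ∈ Gl, ∃ α : Fin n → ℝ, (∀ i, 0 ≤ α i) ∧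
      (∑ i ∈ Gk, α i) < 1 ∧
      vecMulVec (x j) (x j) = ∑ i ∈ Gk, α i • vecMulVec (x i) (x i))
    (w : Fin n → ℝ) (hw : ∀ i, 0 ≤ w i)
    (hpd : (∑ i, w i • vecMulVec (x i) (x i)).PosDef)
    (c : ℝ) (hc : 0 < c)
    (j : Fin n) (hj : j ∈ Gl)
    (hstatj : x j ⬝ᵥ (∑ i, w i • vecMulVec (x i) (x i))⁻¹ *ᵥ x j = c)
    (hstatk : ∀ i ∈ Gk,
      x i ⬝ᵥ (∑ i', w i' • vecMulVec (x i') (x i'))⁻¹ *ᵥ x i ≤ c) :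
    False := by
  obtain ⟨α, hα0, hαsum, hrep⟩ := hcover j hj
  set A := (∑ i, w i • vecMulVec (x i) (x i))⁻¹ with hA
  have key : c = ∑ i ∈ Gk, α i * (x i ⬝ᵥ A *ᵥ x i) := by
    rw [← hstatj, quad_eq_trace, hrep, Finset.mul_sum]
    rw [trace_sum]
    refine Finset.sum_congr rfl fun i _ => ?_
    rw [quad_eq_trace, Matrix.mul_smul, trace_smul, smul_eq_mul]
  have hle : ∑ i ∈ Gk, α i * (x i ⬝ᵥ A *ᵥ x i) ≤ ∑ i ∈ Gk, α i * c :=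
    Finset.sum_le_sum fun i hi => mul_le_mul_of_nonneg_left (hstatk i hi) (hα0 i)
  have hlt : ∑ i ∈ Gk, α i * c < c := by
    rw [← Finset.sum_mul]
    calc (∑ i ∈ Gk, α i) * c < 1 * c := by
          exact mul_lt_mul_of_pos_right hαsum hc
      _ = c := one_mul c
  linarith [key, hle, hlt]
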